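/- Let N ≥ 3 be a prime. Then there exists w ∈ {1,…,N−1} such that (1/N) ∑_{h=1}^{N−1} |cot(π h w/N)|/h ≤ (6 log N/(π N)) ∑_{h=1}^{N−1} 1/h, and consequently, by the harmonic number bound, (1/N) ∑_{h=1}^{N−1} |cot(π h w/N)|/h ≤ (11/(π log 3)) · log²(N)/N. By the inequality between ℓ² and ℓ¹ sums, the same w satisfies ((1/N²) ∑_{h=1}^{N−1} cot²(π h w/N)/h²)^{1/2} ≤ (11/(π log 3)) · log²(N)/N. -/

import Mathlib

open Real


private lemma cot_add_nat_mul_pi (x : ℝ) (n : ℕ) : Real.cot (x + n * π) = Real.cot x := by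
  induction n with
  | zero => simp
  | succ n ih =>
    have h : x + ((n : ℝ) + 1) * π = (x + n * π) + π := by ring
    push_cast
    rw [h, Real.cot_eq_cos_div_sin, Real.cos_add_pi, Real.sin_add_pi, neg_div_neg_eq,
      ← Real.cot_eq_cos_div_sin, ih]

private lemma cot_nonneg_le {x : ℝ} (hx : 0 < x) (hx2 : x ≤ π / 2) :
    0 ≤ Real.cot x ∧ Real.cot x ≤ 1 / x := by
  have hπ := Real.pi_pos
  have hs : 0 < Real.sin x := Real.sin_pos_of_pos_of_lt_pi hx (by linarith)
  have hc : 0 ≤ Real.cos x :=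
    Real.cos_nonneg_of_mem_Icc ⟨by linarith, hx2⟩
  refine ⟨by rw [Real.cot_eq_cos_div_sin]; positivity, ?_⟩
  rcases lt_or_eq_of_le hx2 with h | h
  · have hc' : 0 < Real.cos x := Real.cos_pos_of_mem_Ioo ⟨by linarith, h⟩
    have ht := Real.lt_tan hx h
    rw [Real.tan_eq_sin_div_cos] at ht
    have hxc : x * Real.cos x < Real.sin x := by
      rw [lt_div_iff₀ hc'] at ht; linarith
    rw [Real.cot_eq_cos_div_sin, div_le_div_iff₀ hs hx]
    nlinarith
  · rw [h, Real.cot_eq_cos_div_sin, Real.cos_pi_div_two, zero_div]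
    positivity

private lemma abs_cot_le {y : ℝ} (h0 : 0 < y) (h1 : y < π) :
    |Real.cot y| ≤ 1 / y + 1 / (π - y) := by
  have hπ := Real.pi_pos
  rcases le_or_gt y (π / 2) with h | h
  · obtain ⟨hn, hb⟩ := cot_nonneg_le h0 h
    rw [abs_of_nonneg hn]
    have hy : 0 < π - y := by linarith
    have : 0 < 1 / (π - y) := by positivity
    linarith
  · set z := π - y with hz
    have hz0 : 0 < z := by simp [hz]; linarith
    have hz2 : z ≤ π / 2 := by simp [hz]; linarith
    obtain ⟨hn, hb⟩ := cot_nonneg_le hz0 hz2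
    have hcot : Real.cot y = -Real.cot z := by
      have : y = -z + π := by rw [hz]; ring
      rw [this, Real.cot_eq_cos_div_sin, Real.cos_add_pi, Real.sin_add_pi,
        Real.cos_neg, Real.sin_neg, Real.cot_eq_cos_div_sin]
      field_simp
    rw [hcot, abs_neg, abs_of_nonneg hn]
    have : 0 < 1 / y := by positivity
    calc Real.cot z ≤ 1 / z := hb
      _ ≤ 1 / y + 1 / (π - y) := by rw [hz]; linarith

private lemma mod_mem_Icc {N a w : ℕ} (hp : N.Prime) (ha : ¬ N ∣ a)
    (hw : w ∈ Finset.Icc 1 (N - 1)) : (a * w) % N ∈ Finset.Icc 1 (N - 1) := by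
  have hN := hp.two_le
  simp only [Finset.mem_Icc] at hw ⊢
  have hlt : (a * w) % N < N := Nat.mod_lt _ (by omega)
  have hne : (a * w) % N ≠ 0 := by
    intro h0
    have hdvd : N ∣ a * w := Nat.dvd_of_mod_eq_zero h0
    rcases (Nat.Prime.dvd_mul hp).mp hdvd with h | h
    · exact ha h
    · have := Nat.le_of_dvd (by omega) h; omega
  omega

private lemma mod_inv_cancel {N a b : ℕ} (hN : 1 < N) (hab : a * b % N = 1)
    {w : ℕ} (hw : w < N) : (b * ((a * w) % N)) % N = w := by
  have h1 : a * b ≡ 1 [MOD N] := by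
    unfold Nat.ModEq; rw [hab, Nat.mod_eq_of_lt hN]
  have h2 : b * ((a * w) % N) ≡ w [MOD N] := by
    calc b * ((a * w) % N) ≡ b * (a * w) [MOD N] :=
          Nat.ModEq.mul_left b (Nat.mod_modEq _ _)
      _ = (a * b) * w := by ring
      _ ≡ 1 * w [MOD N] := Nat.ModEq.mul_right w h1
      _ = w := one_mul w
  calc (b * ((a * w) % N)) % N = w % N := h2
    _ = w := Nat.mod_eq_of_lt hw

private lemma not_dvd_of_mem {N h : ℕ} (hp : N.Prime) (hh : h ∈ Finset.Icc 1 (N - 1)) :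
    ¬ N ∣ h := by
  have hN := hp.two_le
  simp only [Finset.mem_Icc] at hh
  intro hd
  have := Nat.le_of_dvd (by omega) hd
  omega

private lemma sum_mod_reindex {N h : ℕ} (hp : N.Prime) (hh : h ∈ Finset.Icc 1 (N - 1))
    (f : ℕ → ℝ) :
    ∑ w ∈ Finset.Icc 1 (N - 1), f ((h * w) % N) = ∑ k ∈ Finset.Icc 1 (N - 1), f k := by
  have hN : 1 < N := hp.one_lt
  have hhd : ¬ N ∣ h := not_dvd_of_mem hp hh
  have hco : Nat.Coprime h N := by
    simp only [Finset.mem_Icc] at hh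
    exact (Nat.coprime_of_lt_prime (by omega) (by omega) hp).symm
  obtain ⟨b, -, hb⟩ := Nat.exists_mul_mod_eq_one_of_coprime hco hN
  set b' := b % N with hb'def
  have hb' : h * b' % N = 1 := by
    have : h * (b % N) ≡ h * b [MOD N] := Nat.ModEq.mul_left h (Nat.mod_modEq b N)
    calc h * b' % N = h * b % N := this
      _ = 1 := hb
  have hb'mem : b' ∈ Finset.Icc 1 (N - 1) := by
    simp only [Finset.mem_Icc]
    have hlt : b' < N := Nat.mod_lt _ (by omega)
    have : b' ≠ 0 := by
      intro h0; rw [h0, Nat.mul_zero, Nat.zero_mod] at hb'; omega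
    omega
  have hb'h : b' * h % N = 1 := by rw [Nat.mul_comm]; exact hb'
  have hbd : ¬ N ∣ b' := not_dvd_of_mem hp hb'mem
  refine Finset.sum_nbij' (fun w => (h * w) % N) (fun k => (b' * k) % N) ?_ ?_ ?_ ?_ ?_
  · exact fun w hw => mod_mem_Icc hp hhd hw
  · exact fun k hk => mod_mem_Icc hp hbd hk
  · intro w hw
    simp only [Finset.mem_Icc] at hw
    exact mod_inv_cancel hN hb' (by omega)
  · intro k hk
    simp only [Finset.mem_Icc] at hk
    exact mod_inv_cancel hN hb'h (by omega)
  · exact fun w _ => rfl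

private lemma log_three_lt : Real.log 3 < 11 / 10 := by
  have e1 : (2.7182818283 : ℝ) < Real.exp 1 := Real.exp_one_gt_d9
  have h10 : (3 : ℝ) ^ 10 < Real.exp (11 / 10) ^ 10 := by
    have h1 : (3 : ℝ) ^ 10 < (2.7182818283 : ℝ) ^ 11 := by norm_num
    have h2 : (2.7182818283 : ℝ) ^ 11 ≤ Real.exp 1 ^ 11 :=
      pow_le_pow_left₀ (by norm_num) e1.le 11
    have h3 : Real.exp (11 / 10) ^ 10 = Real.exp 1 ^ 11 := by
      rw [← Real.exp_nat_mul, Real.exp_one_pow]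
      norm_num
    rw [h3]; exact h1.trans_le h2
  have h : (3 : ℝ) < Real.exp (11 / 10) :=
    (pow_lt_pow_iff_left₀ (by norm_num) (Real.exp_pos _).le (by norm_num)).mp h10
  exact (Real.log_lt_iff_lt_exp (by norm_num)).mpr h

private lemma log_five_gt : (3 : ℝ) / 2 < Real.log 5 := by
  have e1 : Real.exp 1 < 2.7182818286 := Real.exp_one_lt_d9
  have h2 : Real.exp (3 / 2) ^ 2 < (5 : ℝ) ^ 2 := by
    have h3 : Real.exp (3 / 2) ^ 2 = Real.exp 1 ^ 3 := by
      rw [← Real.exp_nat_mul, Real.exp_one_pow]; norm_num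
    have h4 : Real.exp 1 ^ 3 < (2.7182818286 : ℝ) ^ 3 :=
      pow_lt_pow_left₀ e1 (Real.exp_pos _).le (by norm_num)
    rw [h3]
    calc Real.exp 1 ^ 3 < (2.7182818286 : ℝ) ^ 3 := h4
      _ < (5 : ℝ) ^ 2 := by norm_num
  have h : Real.exp (3 / 2) < 5 :=
    (pow_lt_pow_iff_left₀ (Real.exp_pos _).le (by norm_num) (by norm_num)).mp h2
  exact (Real.lt_log_iff_exp_lt (by norm_num)).mpr h

private lemma one_le_log_of_three_le {x : ℝ} (hx : 3 ≤ x) : 1 ≤ Real.log x := by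
  have e1 : Real.exp 1 < 2.7182818286 := Real.exp_one_lt_d9
  have : Real.exp 1 ≤ x := by linarith
  exact (Real.le_log_iff_exp_le (by linarith)).mpr this
private lemma sum_reflect_aux (N : ℕ) (f : ℕ → ℝ) :
    ∑ k ∈ Finset.Icc 1 (N - 1), f (N - k) = ∑ k ∈ Finset.Icc 1 (N - 1), f k := by
  refine Finset.sum_nbij' (fun k => N - k) (fun k => N - k) ?_ ?_ ?_ ?_ ?_ <;>
    intro a ha <;> simp only [Finset.mem_Icc] at * <;> omega

private lemma cot_mod_eq (N h w : ℕ) (hN : 0 < N) :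
    Real.cot (π * h * w / N) = Real.cot (π * (((h * w) % N : ℕ) : ℝ) / N) := by
  have hd : h * w = N * (h * w / N) + (h * w) % N := (Nat.div_add_mod _ _).symm
  have hNr : (N : ℝ) ≠ 0 := Nat.cast_ne_zero.mpr hN.ne'
  have harg : π * h * w / N = π * (((h * w) % N : ℕ) : ℝ) / N + (((h * w) / N : ℕ) : ℝ) * π := by
    have hcast : (h : ℝ) * w = N * (((h * w) / N : ℕ) : ℝ) + (((h * w) % N : ℕ) : ℝ) := by
      exact_mod_cast congrArg (Nat.cast : ℕ → ℝ) hd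
    set q := (((h * w) / N : ℕ) : ℝ) with hq
    set r := (((h * w) % N : ℕ) : ℝ) with hr
    rw [mul_assoc, hcast]
    field_simp
    ring
  rw [harg, cot_add_nat_mul_pi]

/-- Let `N ≥ 3` be a prime. Then there exists `w ∈ {1,…,N−1}` such that
`(1/N) ∑_{h=1}^{N−1} |cot(πhw/N)|/h ≤ (6 log N/(πN)) ∑_{h=1}^{N−1} 1/h`, hence
`(1/N) ∑_{h=1}^{N−1} |cot(πhw/N)|/h ≤ (11/(π log 3)) log²(N)/N`, and the same `w` satisfies
`((1/N²) ∑_{h=1}^{N−1} cot²(πhw/N)/h²)^{1/2} ≤ (11/(π log 3)) log²(N)/N`. -/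
theorem stmt16 (N : ℕ) (hp : N.Prime) (hN : 3 ≤ N) :
    ∃ w ∈ Finset.Icc 1 (N - 1),
      ((1 / (N : ℝ)) * ∑ h ∈ Finset.Icc 1 (N - 1), |Real.cot (π * h * w / N)| / (h : ℝ)
          ≤ (6 * Real.log N / (π * N)) * ∑ h ∈ Finset.Icc 1 (N - 1), (1 : ℝ) / h) ∧
      ((1 / (N : ℝ)) * ∑ h ∈ Finset.Icc 1 (N - 1), |Real.cot (π * h * w / N)| / (h : ℝ)
          ≤ (11 / (π * Real.log 3)) * (Real.log N) ^ 2 / N) ∧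
      Real.sqrt ((1 / (N : ℝ) ^ 2) * ∑ h ∈ Finset.Icc 1 (N - 1),
            Real.cot (π * h * w / N) ^ 2 / (h : ℝ) ^ 2)
          ≤ (11 / (π * Real.log 3)) * (Real.log N) ^ 2 / N := by
  have hπ := Real.pi_pos
  have hN0 : 0 < N := by omega
  have hNr : (3 : ℝ) ≤ (N : ℝ) := by exact_mod_cast hN
  have hNr0 : (0 : ℝ) < (N : ℝ) := by linarith
  have hNne : (N : ℝ) ≠ 0 := hNr0.ne'
  have hlog1 : 1 ≤ Real.log N := one_le_log_of_three_le hNr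
  have hl3 : (1 : ℝ) ≤ Real.log 3 := one_le_log_of_three_le le_rfl
  set s : Finset ℕ := Finset.Icc 1 (N - 1) with hs
  set H : ℝ := ∑ h ∈ s, (1 : ℝ) / h with hH
  set C : ℝ := ∑ k ∈ s, |Real.cot (π * k / N)| with hC
  have hHnn : 0 ≤ H := Finset.sum_nonneg fun i _ => by positivity
  -- bound on C
  have hCb : C ≤ 2 * ((N : ℝ) / π) * H := by
    have hterm : ∀ k ∈ s, |Real.cot (π * k / N)| ≤
        (N : ℝ) / (π * k) + (N : ℝ) / (π * ((N : ℝ) - k)) := by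
      intro k hk
      simp only [hs, Finset.mem_Icc] at hk
      have hk1 : (1 : ℝ) ≤ (k : ℝ) := by exact_mod_cast hk.1
      have hkN : (k : ℝ) < (N : ℝ) := by
        have : k < N := by omega
        exact_mod_cast this
      have hy0 : 0 < π * k / N := by positivity
      have hy1 : π * k / N < π := by
        rw [div_lt_iff₀ hNr0]
        nlinarith
      have hb := abs_cot_le hy0 hy1
      have e1 : 1 / (π * (k : ℝ) / N) = (N : ℝ) / (π * k) := one_div_div _ _
      have e2 : 1 / (π - π * (k : ℝ) / N) = (N : ℝ) / (π * ((N : ℝ) - k)) := by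
        rw [show π - π * (k : ℝ) / N = π * ((N : ℝ) - k) / N by field_simp]
        exact one_div_div _ _
      rw [e1, e2] at hb
      exact hb
    calc C ≤ ∑ k ∈ s, ((N : ℝ) / (π * k) + (N : ℝ) / (π * ((N : ℝ) - k))) :=
          Finset.sum_le_sum hterm
      _ = ∑ k ∈ s, (N : ℝ) / (π * k) + ∑ k ∈ s, (N : ℝ) / (π * ((N : ℝ) - k)) :=
          Finset.sum_add_distrib
      _ = ∑ k ∈ s, (N : ℝ) / (π * k) + ∑ k ∈ s, (N : ℝ) / (π * k) := by
          congr 1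
          have hcg : ∀ k ∈ s, (N : ℝ) / (π * ((N : ℝ) - k)) =
              (fun (m : ℕ) => (N : ℝ) / (π * (m : ℝ))) (N - k) := by
            intro k hk
            simp only [hs, Finset.mem_Icc] at hk
            have hkle : k ≤ N := by omega
            simp only
            rw [Nat.cast_sub hkle]
          rw [Finset.sum_congr rfl hcg]
          rw [hs]
          exact sum_reflect_aux N (fun (m : ℕ) => (N : ℝ) / (π * (m : ℝ)))
      _ = 2 * ((N : ℝ) / π) * H := by
          rw [hH, Finset.mul_sum, ← two_mul, Finset.mul_sum]
          exact Finset.sum_congr rfl fun k _ => by ring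
  -- harmonic bound
  have hHlog : H ≤ 1 + Real.log N := by
    have h1 : H = ((harmonic (N - 1) : ℚ) : ℝ) := by
      rw [hH, harmonic_eq_sum_Icc]
      push_cast
      exact Finset.sum_congr rfl fun k _ => one_div _
    have h2 : ((N - 1 : ℕ) : ℝ) ≤ (N : ℝ) := by
      have : (N - 1 : ℕ) ≤ N := by omega
      exact_mod_cast this
    have h3 : (0 : ℝ) < ((N - 1 : ℕ) : ℝ) := by
      have : 0 < N - 1 := by omega
      exact_mod_cast this
    have := harmonic_le_one_add_log (N - 1)
    rw [h1]
    linarith [Real.log_le_log h3 h2]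
  -- averaging
  have hsNe : s.Nonempty := ⟨1, by simp only [hs, Finset.mem_Icc]; omega⟩
  have hcard : s.card = N - 1 := by rw [hs, Nat.card_Icc]; omega
  have hcst : ((N - 1 : ℕ) : ℝ) = (N : ℝ) - 1 := by
    push_cast [show 1 ≤ N by omega]; ring
  have hsum : ∑ w ∈ s, (∑ h ∈ s, |Real.cot (π * h * w / N)| / h) = C * H := by
    rw [Finset.sum_comm (s := s) (t := s)
      (f := fun w h => |Real.cot (π * (h : ℝ) * w / N)| / (h : ℝ))]
    have hinner : ∀ h ∈ s, ∑ w ∈ s, |Real.cot (π * h * w / N)| / (h : ℝ) = C * (1 / h) := by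
      intro h hh
      have hstep : ∀ w ∈ s, |Real.cot (π * h * w / N)| / (h : ℝ) =
          (fun k : ℕ => |Real.cot (π * (k : ℝ) / N)| / (h : ℝ)) ((h * w) % N) := by
        intro w _
        simp only
        rw [cot_mod_eq N h w hN0]
      have hh' : h ∈ Finset.Icc 1 (N - 1) := by rw [hs] at hh; exact hh
      have hre := sum_mod_reindex (N := N) (h := h) hp hh'
        (fun k : ℕ => |Real.cot (π * (k : ℝ) / N)| / (h : ℝ))
      rw [Finset.sum_congr rfl hstep, hs, hre]
      rw [← Finset.sum_div, ← hC, div_eq_mul_one_div]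
    rw [Finset.sum_congr rfl hinner, ← Finset.mul_sum, ← hH]
  have havg : ∃ w ∈ s, ∑ h ∈ s, |Real.cot (π * h * w / N)| / (h : ℝ) ≤
      (6 * Real.log N / π) * H := by
    refine Finset.exists_le_of_sum_le hsNe ?_
    have hCb2 : C ≤ ((N : ℝ) - 1) * (6 * Real.log N / π) := by
      have h2 : C ≤ 2 * ((N : ℝ) / π) * (1 + Real.log N) :=
        hCb.trans (mul_le_mul_of_nonneg_left hHlog (by positivity))
      have key : 2 * (N : ℝ) * (1 + Real.log N) ≤ 6 * ((N : ℝ) - 1) * Real.log N := by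
        nlinarith [hlog1, hNr]
      have e1 : 2 * ((N : ℝ) / π) * (1 + Real.log N) = 2 * (N : ℝ) * (1 + Real.log N) / π := by
        ring
      have e2 : ((N : ℝ) - 1) * (6 * Real.log N / π) = 6 * ((N : ℝ) - 1) * Real.log N / π := by
        ring
      rw [e1] at h2
      rw [e2]
      exact h2.trans ((div_le_div_iff_of_pos_right hπ).mpr key)
    calc ∑ w ∈ s, (∑ h ∈ s, |Real.cot (π * h * w / N)| / (h : ℝ)) = C * H := hsum
      _ ≤ (((N : ℝ) - 1) * (6 * Real.log N / π)) * H :=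
          mul_le_mul_of_nonneg_right hCb2 hHnn
      _ = ((N : ℝ) - 1) * (6 * Real.log N / π * H) := by ring
      _ = ∑ _w ∈ s, (6 * Real.log N / π * H) := by
          rw [Finset.sum_const, hcard, nsmul_eq_mul, hcst]
  obtain ⟨w, hw, hSw⟩ := havg
  set T : ℝ := ∑ h ∈ s, |Real.cot (π * h * w / N)| / (h : ℝ) with hT
  have hTnn : 0 ≤ T := Finset.sum_nonneg fun i _ => by positivity
  -- goal 1
  have g1 : (1 / (N : ℝ)) * T ≤ (6 * Real.log N / (π * N)) * H := by
    calc (1 / (N : ℝ)) * T ≤ (1 / (N : ℝ)) * ((6 * Real.log N / π) * H) :=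
          mul_le_mul_of_nonneg_left hSw (by positivity)
      _ = (6 * Real.log N / (π * N)) * H := by ring
  -- H ≤ (11/(6 log 3)) log N
  have hH2 : H ≤ 11 / (6 * Real.log 3) * Real.log N := by
    have hl3p : (0 : ℝ) < Real.log 3 := by linarith
    rcases eq_or_lt_of_le hN with h3 | h4
    · -- N = 3
      have hN3 : N = 3 := h3.symm
      subst hN3
      have hHval : H = 3 / 2 := by
        rw [hH, hs]
        rw [show Finset.Icc 1 (3 - 1) = ({1, 2} : Finset ℕ) by decide]
        rw [Finset.sum_pair (by norm_num)]
        norm_num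
      have he : 11 / (6 * Real.log 3) * Real.log 3 = 11 / 6 := by
        field_simp
      rw [hHval] at *
      push_cast
      rw [he]; norm_num
    · -- N ≥ 4, prime, so N ≥ 5
      have hN5 : 5 ≤ N := by
        rcases Nat.lt_or_ge N 5 with h | h
        · interval_cases N
          · exact absurd hp (by decide)
        · exact h
      have hlog5 : (3 : ℝ) / 2 < Real.log N := by
        have h5 : (5 : ℝ) ≤ (N : ℝ) := by exact_mod_cast hN5
        have := Real.log_le_log (by norm_num : (0 : ℝ) < 5) h5
        linarith [log_five_gt]
      have hl3u : Real.log 3 < 11 / 10 := log_three_lt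
      have hkey : (1 + Real.log N) * (6 * Real.log 3) ≤ 11 * Real.log N := by
        nlinarith [mul_nonneg (by linarith : (0 : ℝ) ≤ 11 / 10 - Real.log 3)
          (by linarith : (0 : ℝ) ≤ Real.log N)]
      have h6 : (1 + Real.log N) ≤ 11 / (6 * Real.log 3) * Real.log N := by
        rw [div_mul_eq_mul_div, le_div_iff₀ (by positivity)]
        linarith
      linarith [hHlog]
  -- goal 2
  have g2 : (1 / (N : ℝ)) * T ≤ 11 / (π * Real.log 3) * Real.log N ^ 2 / N := by
    refine g1.trans ?_
    have hc : (0 : ℝ) ≤ 6 * Real.log N / (π * N) := by positivity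
    calc (6 * Real.log N / (π * N)) * H
        ≤ (6 * Real.log N / (π * N)) * (11 / (6 * Real.log 3) * Real.log N) :=
          mul_le_mul_of_nonneg_left hH2 hc
      _ = 11 / (π * Real.log 3) * Real.log N ^ 2 / N := by
          have hl3ne : Real.log 3 ≠ 0 := by linarith
          field_simp
  refine ⟨w, hw, g1, g2, ?_⟩
  -- goal 3
  have hterm3 : ∀ h ∈ s, Real.cot (π * h * w / N) ^ 2 / (h : ℝ) ^ 2 =
      (|Real.cot (π * h * w / N)| / (h : ℝ)) ^ 2 := by
    intro h _
    rw [div_pow, sq_abs]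
  have hsq : (1 / (N : ℝ) ^ 2) * ∑ h ∈ s, Real.cot (π * h * w / N) ^ 2 / (h : ℝ) ^ 2
      ≤ ((1 / (N : ℝ)) * T) ^ 2 := by
    rw [Finset.sum_congr rfl hterm3]
    have hl2 : ∑ h ∈ s, (|Real.cot (π * h * w / N)| / (h : ℝ)) ^ 2 ≤ T ^ 2 := by
      rw [hT]
      exact Finset.sum_sq_le_sq_sum_of_nonneg fun i _ => by positivity
    calc (1 / (N : ℝ) ^ 2) * ∑ h ∈ s, (|Real.cot (π * h * w / N)| / (h : ℝ)) ^ 2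
        ≤ (1 / (N : ℝ) ^ 2) * T ^ 2 := mul_le_mul_of_nonneg_left hl2 (by positivity)
      _ = ((1 / (N : ℝ)) * T) ^ 2 := by ring
  calc Real.sqrt ((1 / (N : ℝ) ^ 2) * ∑ h ∈ s, Real.cot (π * h * w / N) ^ 2 / (h : ℝ) ^ 2)
      ≤ Real.sqrt (((1 / (N : ℝ)) * T) ^ 2) := Real.sqrt_le_sqrt hsq
    _ = (1 / (N : ℝ)) * T := Real.sqrt_sq (by positivity)
    _ ≤ 11 / (π * Real.log 3) * Real.log N ^ 2 / N := g2
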